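/- Let M be an n×n real symmetric irreducible matrix with eigenvalue λ of index k, and let φ be an eigenvector for λ with all entries nonzero. Then there exists a partition [n] = V_1 ⊔ ... ⊔ V_s with s ≤ k + f such that each induced subgraph G[V_ℓ] (on edges where M_{ij} ≠ 0) is connected and M_{ij} φ(i) φ(j) < 0 for all edges (i,j) within each V_ℓ; here f is the frustration index of the signed graph of M. -/

import Mathlib

open Matrix Finset

noncomputable def graphOf {n : ℕ} (M : Matrix (Fin n) (Fin n) ℝ) : SimpleGraph (Fin n) :=
  SimpleGraph.fromRel (fun i j => M i j ≠ 0)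

/-- The frustration index of the signed graph of `M` (sign of an edge `(i,j)` is
`-sgn (M i j)`): the minimal number of frustrated edges over all states `ε ∈ {±1}ⁿ`.
An edge `(i,j)` is frustrated for `ε` iff `-sgn(M i j) * ε i * ε j < 0`, i.e. iff
`0 < M i j * ε i * ε j`. -/
noncomputable def frustrationIndex {n : ℕ} (M : Matrix (Fin n) (Fin n) ℝ) : ℕ :=
  sInf { m : ℕ | ∃ ε : Fin n → ℝ, (∀ i, ε i = 1 ∨ ε i = -1) ∧
    m = (Finset.univ.filter (fun p : Fin n × Fin n =>
      p.1 < p.2 ∧ 0 < M p.1 p.2 * ε p.1 * ε p.2)).card }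

lemma reachable_const {V : Type*} {G : SimpleGraph V} {α : Type*} {c : V → α}
    (h : ∀ i j, G.Adj i j → c i = c j) {u v : V} (hr : G.Reachable u v) : c u = c v := by
  obtain ⟨w⟩ := hr
  induction w with
  | nil => rfl
  | cons hadj _ ih => exact (h _ _ hadj).trans ih


lemma dot_sum_sum {n : ℕ} {ι : Type*} [Fintype ι] (g h : ι → Fin n → ℝ) :
    (∑ i, g i) ⬝ᵥ (∑ j, h j) = ∑ i, ∑ j, g i ⬝ᵥ h j := by
  simp only [dotProduct, Finset.sum_apply, Finset.sum_mul_sum]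
  rw [Finset.sum_comm]
  exact Finset.sum_congr rfl fun i _ => Finset.sum_comm


lemma finrank_le_card_eig_lt {n : ℕ} {M : Matrix (Fin n) (Fin n) ℝ} (hM : M.IsHermitian)
    (lam : ℝ) (W : Submodule ℝ (Fin n → ℝ))
    (hW : ∀ x ∈ W, x ≠ 0 → x ⬝ᵥ (M *ᵥ x) < lam * (x ⬝ᵥ x)) :
    Module.finrank ℝ W ≤ (Finset.univ.filter (fun i => hM.eigenvalues i < lam)).card := by
  classical
  by_contra hcon
  push_neg at hcon
  set S := {i : Fin n // ¬ hM.eigenvalues i < lam} with hS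
  set v : S → (Fin n → ℝ) := fun i => ⇑(hM.eigenvectorBasis i.1) with hv
  have hvli : LinearIndependent ℝ v :=
    ((hM.eigenvectorBasis.orthonormal.linearIndependent).comp Subtype.val Subtype.val_injective).map'
      (WithLp.linearEquiv 2 ℝ (Fin n → ℝ)).toLinearMap (LinearEquiv.ker _)
  set E := Submodule.span ℝ (Set.range v) with hE
  have hEr : Module.finrank ℝ E = Fintype.card S := finrank_span_eq_card hvli
  have hcS : Fintype.card S
      = n - (Finset.univ.filter (fun i => hM.eigenvalues i < lam)).card := by
    rw [Fintype.card_subtype]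
    have := Finset.card_filter_add_card_filter_not
      (s := (Finset.univ : Finset (Fin n))) (p := fun i => hM.eigenvalues i < lam)
    simp only [Finset.card_univ, Fintype.card_fin] at this
    omega
  have hfin : Module.finrank ℝ (W ⊓ E : Submodule ℝ (Fin n → ℝ)) ≥ 1 := by
    have hsum := Submodule.finrank_sup_add_finrank_inf_eq W E
    have hle : Module.finrank ℝ (W ⊔ E : Submodule ℝ (Fin n → ℝ)) ≤ n := by
      simpa [Module.finrank_fin_fun] using (W ⊔ E).finrank_le
    have hcard_le : (Finset.univ.filter (fun i => hM.eigenvalues i < lam)).card ≤ n := by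
      simpa using Finset.card_filter_le Finset.univ (fun i => hM.eigenvalues i < lam)
    omega
  have hnb : (W ⊓ E : Submodule ℝ (Fin n → ℝ)) ≠ ⊥ := by
    intro hb
    rw [hb] at hfin
    simp [finrank_bot] at hfin
  obtain ⟨x, hxmem, hx0⟩ := Submodule.exists_mem_ne_zero_of_ne_bot hnb
  have hxW : x ∈ W := hxmem.1
  have hxE : x ∈ E := hxmem.2
  obtain ⟨d, hd⟩ := (Submodule.mem_span_range_iff_exists_fun ℝ).mp hxE
  have horth : ∀ i j : S, v i ⬝ᵥ v j = if i = j then 1 else 0 := by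
    intro i j
    have h1 := (orthonormal_iff_ite.mp hM.eigenvectorBasis.orthonormal) i.1 j.1
    have h2 : (inner ℝ (hM.eigenvectorBasis i.1) (hM.eigenvectorBasis j.1) : ℝ)
        = v i ⬝ᵥ v j := by
      simp [PiLp.inner_apply, dotProduct, hv, mul_comm]
    rw [h2] at h1
    rw [h1]
    rcases eq_or_ne i j with rfl | hne
    · simp
    · rw [if_neg (fun hh => hne (Subtype.ext hh)), if_neg hne]
  have hMv : ∀ j : S, M *ᵥ v j = hM.eigenvalues j.1 • v j := fun j =>
    hM.mulVec_eigenvectorBasis j.1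
  have hxx : x ⬝ᵥ x = ∑ i : S, d i * d i := by
    rw [← hd, dot_sum_sum]
    rw [Finset.sum_congr rfl (fun i _ => Finset.sum_congr rfl (fun j _ => by
      rw [smul_dotProduct, dotProduct_smul, horth i j]))]
    simp [mul_ite, Finset.sum_ite_eq]
    exact Finset.sum_congr rfl fun i _ => by
      rw [Finset.sum_eq_single i (fun b _ hb => if_neg (Ne.symm hb)) (by simp), if_pos rfl]
  have hxMx : x ⬝ᵥ (M *ᵥ x) = ∑ i : S, hM.eigenvalues i.1 * (d i * d i) := by
    rw [← hd]
    have hmv : M *ᵥ (∑ i : S, d i • v i) = ∑ i : S, d i • (hM.eigenvalues i.1 • v i) := by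
      rw [← Matrix.mulVecLin_apply, map_sum]
      exact Finset.sum_congr rfl fun i _ => by rw [LinearMap.map_smul, Matrix.mulVecLin_apply, hMv i]
    rw [hmv, dot_sum_sum]
    rw [Finset.sum_congr rfl (fun i _ => Finset.sum_congr rfl (fun j _ => by
      rw [smul_dotProduct, dotProduct_smul, dotProduct_smul, horth i j]))]
    simp [mul_ite, Finset.sum_ite_eq]
    exact Finset.sum_congr rfl fun i _ => by
      rw [Finset.sum_eq_single i (fun b _ hb => if_neg (Ne.symm hb)) (by simp), if_pos rfl]; ring
  have hge : lam * (x ⬝ᵥ x) ≤ x ⬝ᵥ (M *ᵥ x) := by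
    rw [hxx, hxMx, Finset.mul_sum]
    apply Finset.sum_le_sum
    intro i _
    exact mul_le_mul_of_nonneg_right (not_lt.mp i.2) (mul_self_nonneg _)
  exact absurd (hW x hxW hx0) (not_lt.mpr hge)

lemma merge_lemma {n s : ℕ} {H : SimpleGraph (Fin n)} {Fr : Fin n → Fin n → Prop}
    (P : Fin n → Fin (s + 1))
    (hconn : ∀ ℓ, (H.induce (P ⁻¹' {ℓ})).Connected)
    (hfr : ∀ i j, P i = P j → i ≠ j → ¬ Fr i j)
    {ℓ ℓ' : Fin (s + 1)} (hll : ℓ ≠ ℓ') {u v : Fin n}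
    (hu : P u = ℓ) (hv : P v = ℓ') (huv : H.Adj u v)
    (hno : ∀ a b, P a = ℓ → P b = ℓ' → ¬ Fr a b)
    (hFrsymm : ∀ a b, Fr a b → Fr b a) :
    ∃ P' : Fin n → Fin s,
      (∀ t, ((H.induce (P' ⁻¹' {t})).Connected)) ∧
      (∀ i j, P' i = P' j → i ≠ j → ¬ Fr i j) := by
  classical
  set E := finSuccEquiv' ℓ' with hE
  have hEl' : E ℓ' = none := finSuccEquiv'_at ℓ'
  obtain ⟨c, hc⟩ : ∃ c, E ℓ = some c := by
    cases h : E ℓ with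
    | none => exact absurd (E.injective (h.trans hEl'.symm)) hll
    | some a => exact ⟨a, rfl⟩
  set P' : Fin n → Fin s := fun i => (E (P i)).getD c with hP'
  -- basic value lemmas
  have hval : ∀ i, (P i = ℓ' ∧ P' i = c) ∨ (P i ≠ ℓ' ∧ E (P i) = some (P' i)) := by
    intro i
    cases h : E (P i) with
    | none =>
      left
      have : P i = ℓ' := E.injective (h.trans hEl'.symm)
      exact ⟨this, by simp [hP', h]⟩
    | some a =>
      right
      refine ⟨fun hh => by simp [hh, hEl'] at h, ?_⟩
      simp [hP', h]
  have hvl : ∀ i, P i = ℓ → P' i = c := by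
    intro i hi; simp [hP', hi, hc]
  have hvl' : ∀ i, P i = ℓ' → P' i = c := by
    intro i hi; simp [hP', hi, hEl']
  have hpreC : P' ⁻¹' {c} = P ⁻¹' {ℓ} ∪ P ⁻¹' {ℓ'} := by
    ext i
    simp only [Set.mem_preimage, Set.mem_singleton_iff, Set.mem_union]
    constructor
    · intro hi
      rcases hval i with ⟨h1, _⟩ | ⟨h1, h2⟩
      · exact Or.inr h1
      · left
        apply E.injective
        rw [h2, hi, hc]
    · rintro (h | h)
      · exact hvl i h
      · exact hvl' i h
  have hpreT : ∀ t, t ≠ c → P' ⁻¹' {t} = P ⁻¹' {E.symm (some t)} := by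
    intro t ht
    ext i
    simp only [Set.mem_preimage, Set.mem_singleton_iff]
    constructor
    · intro hi
      rcases hval i with ⟨_, h2⟩ | ⟨_, h2⟩
      · exact absurd (hi ▸ h2) (by simpa using ht)
      · apply E.injective
        rw [h2, hi, Equiv.apply_symm_apply]
    · intro hi
      have : E (P i) = some t := by rw [hi, Equiv.apply_symm_apply]
      simp [hP', this]
  refine ⟨P', ?_, ?_⟩
  · intro t
    by_cases htc : t = c
    · rw [htc, hpreC]
      have h1 : (H.induce (P ⁻¹' {ℓ} ∪ {u, v})).Connected := by
        apply SimpleGraph.induce_union_connected (hconn ℓ).preconnected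
          (SimpleGraph.induce_pair_connected_of_adj huv).preconnected
        exact ⟨u, hu, by simp⟩
      have h2 : (H.induce ((P ⁻¹' {ℓ} ∪ {u, v}) ∪ P ⁻¹' {ℓ'})).Connected := by
        apply SimpleGraph.induce_union_connected h1.preconnected (hconn ℓ').preconnected
        exact ⟨v, Or.inr (by simp), hv⟩
      have hset : (P ⁻¹' {ℓ} ∪ {u, v}) ∪ P ⁻¹' {ℓ'} = P ⁻¹' {ℓ} ∪ P ⁻¹' {ℓ'} := by
        ext x
        simp only [Set.mem_union, Set.mem_insert_iff, Set.mem_singleton_iff, Set.mem_preimage]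
        constructor
        · rintro ((h | rfl | rfl) | h)
          · exact Or.inl h
          · exact Or.inl hu
          · exact Or.inr hv
          · exact Or.inr h
        · rintro (h | h)
          · exact Or.inl (Or.inl h)
          · exact Or.inr h
      rwa [hset] at h2
    · rw [hpreT t htc]
      exact hconn _
  · intro i j hij hne'
    by_cases hPij : P i = P j
    · exact hfr i j hPij hne'
    · have hkey : (P i = ℓ ∧ P j = ℓ') ∨ (P i = ℓ' ∧ P j = ℓ) := by
        rcases hval i with ⟨h1, h2⟩ | ⟨h1, h2⟩
        · rcases hval j with ⟨h3, h4⟩ | ⟨h3, h4⟩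
          · exact absurd (h1.trans h3.symm) hPij
          · right
            refine ⟨h1, ?_⟩
            apply E.injective
            rw [h4, ← hij, h2, hc]
        · rcases hval j with ⟨h3, h4⟩ | ⟨h3, h4⟩
          · left
            refine ⟨?_, h3⟩
            apply E.injective
            rw [h2, hij, h4, hc]
          · exfalso
            apply hPij
            apply E.injective
            rw [h2, h4, hij]
      rcases hkey with ⟨h1, h2⟩ | ⟨h1, h2⟩
      · exact hno i j h1 h2
      · intro hfr'
        exact hno j i h2 h1 (hFrsymm i j hfr')

lemma spectral_bound {n s₀ : ℕ} (hn : 0 < n) {M : Matrix (Fin n) (Fin n) ℝ}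
    (hM : M.IsHermitian)
    (hirr : (graphOf M).Connected) (hsym : ∀ i j, M i j = M j i)
    (lam : ℝ) (φ : Fin n → ℝ) (hφ : ∀ i, φ i ≠ 0)
    (hlam : ∀ i, ∑ j, M i j * φ j = lam * φ i)
    (F : Finset (Fin n × Fin n))
    (P₀ : Fin n → Fin s₀)
    (hpos : ∀ (a : Fin s₀ → ℝ), (∀ p ∈ F, a (P₀ p.1) = a (P₀ p.2)) →
        ∀ i j, M i j ≠ 0 → a (P₀ i) ≠ a (P₀ j) → 0 < M i j * φ i * φ j)
    (hsurj : ∀ ℓ, ∃ i, P₀ i = ℓ) :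
    s₀ ≤ (Finset.univ.filter (fun i => hM.eigenvalues i < lam)).card + 1 + F.card := by
  classical
  haveI : Nonempty (Fin n) := ⟨⟨0, hn⟩⟩
  set L : (Fin s₀ → ℝ) →ₗ[ℝ] (Fin n → ℝ) :=
    { toFun := fun a => fun i => a (P₀ i) * φ i
      map_add' := by intro a b; funext i; simp [add_mul]
      map_smul' := by intro r a; funext i; simp; ring } with hL
  set Φ : (Fin s₀ → ℝ) →ₗ[ℝ] ((F → ℝ) × ℝ) :=
    (LinearMap.pi (fun p : F =>
        (LinearMap.proj (P₀ p.1.1) : (Fin s₀ → ℝ) →ₗ[ℝ] ℝ)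
          - (LinearMap.proj (P₀ p.1.2) : (Fin s₀ → ℝ) →ₗ[ℝ] ℝ))).prod
      (∑ i : Fin n, (φ i * φ i) • (LinearMap.proj (P₀ i) : (Fin s₀ → ℝ) →ₗ[ℝ] ℝ)) with hΦ
  set W : Submodule ℝ (Fin n → ℝ) := Submodule.map L (LinearMap.ker Φ) with hW
  have hΦ1 : ∀ a (p : F), a ∈ LinearMap.ker Φ → a (P₀ p.1.1) = a (P₀ p.1.2) := by
    intro a p ha
    have h0 : Φ a = 0 := ha
    have := congrFun (congrArg Prod.fst h0) p
    simpa [hΦ, sub_eq_zero] using this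
  have hΦ2 : ∀ a, a ∈ LinearMap.ker Φ → ∑ i, (φ i * φ i) * a (P₀ i) = 0 := by
    intro a ha
    have h0 : Φ a = 0 := ha
    have := congrArg Prod.snd h0
    simpa [hΦ, LinearMap.sum_apply, smul_eq_mul] using this
  -- quadratic property
  have hquad : ∀ x ∈ W, x ≠ 0 → x ⬝ᵥ (M *ᵥ x) < lam * (x ⬝ᵥ x) := by
    intro x hx hx0
    obtain ⟨a, ha, rfl⟩ := hx
    set c : Fin n → ℝ := fun i => a (P₀ i) with hc
    have hcF : ∀ p ∈ F, c p.1 = c p.2 := fun p hp => hΦ1 a ⟨p, hp⟩ ha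
    have hposc : ∀ i j, M i j ≠ 0 → c i ≠ c j → 0 < M i j * φ i * φ j :=
      hpos a (fun p hp => hcF p hp)
    have hxi : ∀ i, (L a) i = c i * φ i := fun i => rfl
    have hxx : (L a) ⬝ᵥ (L a) = ∑ i, (c i * φ i) * (c i * φ i) := rfl
    have hxMx : (L a) ⬝ᵥ (M *ᵥ (L a)) = ∑ i, ∑ j, (c i * φ i) * (M i j * (c j * φ j)) := by
      simp only [dotProduct, Matrix.mulVec, Finset.mul_sum]
      rfl
    set Q : ℝ := ∑ i, ∑ j, M i j * φ i * φ j * (c i - c j)^2 with hQdef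
    have hA : ∑ i, ∑ j, (c i * c i * φ i) * (M i j * φ j)
        = lam * ((L a) ⬝ᵥ (L a)) := by
      rw [hxx, Finset.mul_sum]
      refine Finset.sum_congr rfl (fun i _ => ?_)
      rw [← Finset.mul_sum, hlam i]
      ring
    have hB : ∑ i, ∑ j, (c j * c j * φ j) * (M i j * φ i)
        = lam * ((L a) ⬝ᵥ (L a)) := by
      rw [Finset.sum_comm, hxx, Finset.mul_sum]
      refine Finset.sum_congr rfl (fun j _ => ?_)
      rw [← Finset.mul_sum]
      have : ∑ i, M i j * φ i = lam * φ j := by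
        rw [Finset.sum_congr rfl (fun i _ => by rw [hsym i j])]
        exact hlam j
      rw [this]
      ring
    have hQ : Q = 2*lam*((L a) ⬝ᵥ (L a)) - 2*((L a) ⬝ᵥ (M *ᵥ (L a))) := by
      have key : ∀ i j : Fin n, M i j * φ i * φ j * (c i - c j)^2
          = (c i * c i * φ i) * (M i j * φ j) + (c j * c j * φ j) * (M i j * φ i)
            - 2 * ((c i * φ i) * (M i j * (c j * φ j))) := by
        intro i j; ring
      calc Q = ∑ i, ∑ j, ((c i * c i * φ i) * (M i j * φ j)
              + (c j * c j * φ j) * (M i j * φ i)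
              - 2 * ((c i * φ i) * (M i j * (c j * φ j)))) :=
            Finset.sum_congr rfl (fun i _ => Finset.sum_congr rfl (fun j _ => key i j))
        _ = (∑ i, ∑ j, (c i * c i * φ i) * (M i j * φ j))
              + (∑ i, ∑ j, (c j * c j * φ j) * (M i j * φ i))
              - 2 * (∑ i, ∑ j, (c i * φ i) * (M i j * (c j * φ j))) := by
            simp [Finset.sum_add_distrib, Finset.sum_sub_distrib, Finset.mul_sum]
        _ = 2*lam*((L a) ⬝ᵥ (L a)) - 2*((L a) ⬝ᵥ (M *ᵥ (L a))) := by
            rw [hA, hB, ← hxMx]; ring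
    have hQnn : ∀ i j : Fin n, 0 ≤ M i j * φ i * φ j * (c i - c j)^2 := by
      intro i j
      by_cases hcc : c i = c j
      · simp [hcc]
      · by_cases hm0 : M i j = 0
        · simp [hm0]
        · have h1 := hposc i j hm0 hcc
          have h2 : (0:ℝ) < (c i - c j)^2 := by
            have : c i - c j ≠ 0 := sub_ne_zero.mpr hcc
            positivity
          exact le_of_lt (mul_pos h1 h2)
    have hQpos : 0 < Q := by
      have hQge : 0 ≤ Q := by
        rw [hQdef]
        exact Finset.sum_nonneg (fun i _ => Finset.sum_nonneg (fun j _ => hQnn i j))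
      rcases lt_or_eq_of_le hQge with h | h
      · exact h
      · exfalso
        -- Q = 0 forces c constant and then L a = 0
        have h1 : ∑ i : Fin n, ∑ j : Fin n, M i j * φ i * φ j * (c i - c j)^2 = 0 := by
          rw [← hQdef]; exact h.symm
        have hallz2 : ∀ i j : Fin n, M i j * φ i * φ j * (c i - c j)^2 = 0 := by
          intro i j
          have h2 := (Finset.sum_eq_zero_iff_of_nonneg
            (fun i _ => Finset.sum_nonneg (fun j _ => hQnn i j))).mp h1 i (Finset.mem_univ i)
          exact (Finset.sum_eq_zero_iff_of_nonneg (fun j _ => hQnn i j)).mp h2 j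
            (Finset.mem_univ j)
        have hstep : ∀ i j, (graphOf M).Adj i j → c i = c j := by
          intro i j hadj
          by_contra hcc
          have hm0 : M i j ≠ 0 := by
            rcases hadj with ⟨hne', h1 | h1⟩
            · exact h1
            · rw [hsym i j]; exact h1
          have h1 := hposc i j hm0 hcc
          have h2 : (0:ℝ) < (c i - c j)^2 := by
            have : c i - c j ≠ 0 := sub_ne_zero.mpr hcc
            positivity
          exact absurd (hallz2 i j) (ne_of_gt (mul_pos h1 h2))
        have hcconst : ∀ i j : Fin n, c i = c j := by
          intro i j
          exact reachable_const hstep (hirr.preconnected i j)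
        set i₀ : Fin n := ⟨0, hn⟩ with hi₀
        have hzero : c i₀ = 0 := by
          have h2 := hΦ2 a ha
          have h3 : ∑ i, (φ i * φ i) * c i = 0 := h2
          have h4 : ∑ i, (φ i * φ i) * c i = (∑ i, φ i * φ i) * c i₀ := by
            rw [Finset.sum_mul]
            exact Finset.sum_congr rfl (fun i _ => by rw [hcconst i i₀])
          have h5 : 0 < ∑ i, φ i * φ i :=
            Finset.sum_pos (fun i _ => mul_self_pos.mpr (hφ i)) Finset.univ_nonempty
          rw [h4] at h3
          exact (mul_eq_zero.mp h3).resolve_left (ne_of_gt h5)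
        apply hx0
        funext i
        rw [hxi i, hcconst i i₀, hzero, zero_mul, Pi.zero_apply]
    linarith [hQ, hQpos]
  -- dimension count
  have h1 := LinearMap.finrank_range_add_finrank_ker Φ
  rw [Module.finrank_fin_fun] at h1
  have h2 : Module.finrank ℝ (LinearMap.range Φ) ≤ F.card + 1 := by
    have h3 := Submodule.finrank_le (LinearMap.range Φ)
    rw [Module.finrank_prod, Module.finrank_pi, Module.finrank_self] at h3
    simpa [Fintype.card_coe] using h3
  have hLinj : Function.Injective L := by
    rw [← LinearMap.ker_eq_bot]
    rw [Submodule.eq_bot_iff]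
    intro a ha
    funext ℓ
    obtain ⟨i, rfl⟩ := hsurj ℓ
    have := congrFun (ha : L a = 0) i
    have h5 : a (P₀ i) * φ i = 0 := this
    rcases mul_eq_zero.mp h5 with h | h
    · exact h
    · exact absurd h (hφ i)
  have hWr : Module.finrank ℝ (LinearMap.ker Φ) = Module.finrank ℝ W :=
    (Submodule.equivMapOfInjective L hLinj (LinearMap.ker Φ)).finrank_eq
  have h4 := finrank_le_card_eig_lt hM lam W hquad
  omega

theorem stmt1 {n : ℕ} (hn : 0 < n) {M : Matrix (Fin n) (Fin n) ℝ}
    (hM : M.IsHermitian) (hirr : (graphOf M).Connected)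
    (lam : ℝ) (φ : Fin n → ℝ) (hφ : ∀ i, φ i ≠ 0)
    (heig : M.mulVec φ = lam • φ)
    (k : ℕ)
    (hk : k = (Finset.univ.filter (fun i => hM.eigenvalues i < lam)).card + 1) :
    ∃ s : ℕ, s ≤ k + frustrationIndex M ∧
      ∃ P : Fin n → Fin s, ∀ ℓ : Fin s,
        ((graphOf M).induce (P ⁻¹' {ℓ})).Connected ∧
        ∀ i j, P i = ℓ → P j = ℓ → i ≠ j → M i j ≠ 0 → M i j * φ i * φ j < 0 := by
  classical
  have hsym : ∀ i j, M i j = M j i := by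
    intro i j
    have := congrFun (congrFun hM j) i
    simpa [Matrix.conjTranspose_apply] using this
  have hne : { m : ℕ | ∃ ε : Fin n → ℝ, (∀ i, ε i = 1 ∨ ε i = -1) ∧
      m = (Finset.univ.filter (fun p : Fin n × Fin n =>
        p.1 < p.2 ∧ 0 < M p.1 p.2 * ε p.1 * ε p.2)).card }.Nonempty :=
    ⟨_, fun _ => 1, fun _ => Or.inl rfl, rfl⟩
  obtain ⟨e, he, hfe⟩ := Nat.sInf_mem hne
  have he2 : ∀ i, e i * e i = 1 := by
    intro i; rcases he i with h | h <;> rw [h] <;> norm_num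
  have henz : ∀ i, e i ≠ 0 := by
    intro i; rcases he i with h | h <;> rw [h] <;> norm_num
  set F : Finset (Fin n × Fin n) := Finset.univ.filter (fun p : Fin n × Fin n =>
      p.1 < p.2 ∧ 0 < M p.1 p.2 * e p.1 * e p.2) with hF
  have hfcard : frustrationIndex M = F.card := hfe
  set Fr : Fin n → Fin n → Prop := fun i j => M i j ≠ 0 ∧ 0 < M i j * e i * e j with hFrdef
  have hFrsymm : ∀ i j, Fr i j → Fr j i := by
    intro i j hh
    obtain ⟨h1, h2⟩ := hh
    exact ⟨by rw [← hsym i j]; exact h1, by rw [← hsym i j]; linarith [h2]⟩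
  have hFrF : ∀ i j, i ≠ j → Fr i j → ((i, j) ∈ F ∨ (j, i) ∈ F) := by
    intro i j hij hfr
    rcases lt_or_gt_of_ne hij with h | h
    · exact Or.inl (by
        rw [hF, Finset.mem_filter]
        exact ⟨Finset.mem_univ _, h, by linarith [hfr.2]⟩)
    · exact Or.inr (by
        rw [hF, Finset.mem_filter]
        exact ⟨Finset.mem_univ _, h, by linarith [(hFrsymm i j hfr).2]⟩)
  set R : Fin n → Fin n → Prop := fun i j =>
    M i j ≠ 0 ∧ M i j * e i * e j < 0 ∧ 0 < φ i * φ j * (e i * e j) with hRdef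
  set H : SimpleGraph (Fin n) := SimpleGraph.fromRel R with hHdef
  have hHadj : ∀ i j, H.Adj i j ↔ i ≠ j ∧ (R i j ∨ R j i) := by
    intro i j; rw [hHdef]; rfl
  have hHG : H ≤ graphOf M := by
    intro i j hij
    rw [hHadj] at hij
    refine ⟨hij.1, ?_⟩
    rcases hij.2 with h | h
    · exact Or.inl h.1
    · exact Or.inr h.1
  set T : Set ℕ := { m | ∃ P : Fin n → Fin m,
      (∀ ℓ, ((H.induce (P ⁻¹' {ℓ})).Connected)) ∧
      (∀ i j, P i = P j → i ≠ j → ¬ Fr i j) } with hT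
  have hTn : n ∈ T := by
    refine ⟨fun i => i, ?_, ?_⟩
    · intro ℓ
      have hset : ((fun i : Fin n => i) ⁻¹' {ℓ}) = ({ℓ} : Set (Fin n)) := by
        ext x; simp
      rw [hset]
      haveI : Nonempty (({ℓ} : Set (Fin n))) := ⟨⟨ℓ, rfl⟩⟩
      rw [SimpleGraph.induce_singleton_eq_top]
      exact SimpleGraph.connected_top
    · intro i j hij hne'
      exact absurd hij hne'
  obtain ⟨s₀, ⟨P₀, hP₀conn, hP₀fr⟩, hmin⟩ :
      ∃ s₀, s₀ ∈ T ∧ ∀ m ∈ T, s₀ ≤ m :=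
    ⟨sInf T, Nat.sInf_mem ⟨n, hTn⟩, fun m hm => Nat.sInf_le hm⟩
  -- merge-blocking
  have hMB : ∀ ℓ ℓ', ℓ ≠ ℓ' → (∃ u v, P₀ u = ℓ ∧ P₀ v = ℓ' ∧ H.Adj u v) →
      ∃ u v, P₀ u = ℓ ∧ P₀ v = ℓ' ∧ Fr u v := by
    intro ℓ ℓ' hll hex
    obtain ⟨u, v, hu, hv, huv⟩ := hex
    by_contra hno
    push_neg at hno
    obtain ⟨m, rfl⟩ : ∃ m, s₀ = m + 1 := ⟨s₀ - 1, (Nat.succ_pred_eq_of_pos ℓ.pos).symm⟩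
    obtain ⟨P', hP'conn, hP'fr⟩ :=
      merge_lemma (H := H) (Fr := Fr) P₀ hP₀conn hP₀fr hll hu hv huv hno hFrsymm
    have hmem : m ∈ T := ⟨P', hP'conn, hP'fr⟩
    exact Nat.not_succ_le_self m (hmin m hmem)
  -- sign constancy on parts
  have hsign : ∀ i j, P₀ i = P₀ j → 0 < (φ i * e i) * (φ j * e j) := by
    intro i j hij
    have hadjstep : ∀ a b, H.Adj a b →
        (decide (0 < φ a * e a) = decide (0 < φ b * e b)) := by
      intro a b hab
      rw [hHadj] at hab
      have hprod : 0 < (φ a * e a) * (φ b * e b) := by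
        rcases hab.2 with h | h
        · have := h.2.2; nlinarith [this]
        · have := h.2.2; nlinarith [this]
      have : (0 < φ a * e a) ↔ (0 < φ b * e b) := by
        constructor
        · intro h1; nlinarith
        · intro h1; nlinarith
      simp [decide_eq_decide]
      exact this
    have hiS : i ∈ P₀ ⁻¹' {P₀ j} := hij
    have hjS : j ∈ P₀ ⁻¹' {P₀ j} := rfl
    have hreach : (H.induce (P₀ ⁻¹' {P₀ j})).Reachable ⟨i, hiS⟩ ⟨j, hjS⟩ :=
      (hP₀conn (P₀ j)).preconnected _ _
    have hdec : decide (0 < φ i * e i) = decide (0 < φ j * e j) := by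
      have := reachable_const (G := H.induce (P₀ ⁻¹' {P₀ j}))
        (c := fun a => decide (0 < φ a.1 * e a.1))
        (fun a b hab => hadjstep a.1 b.1 hab) hreach
      exact this
    have hnzi : φ i * e i ≠ 0 := mul_ne_zero (hφ i) (henz i)
    have hnzj : φ j * e j ≠ 0 := mul_ne_zero (hφ j) (henz j)
    rcases lt_or_gt_of_ne hnzi with h1 | h1
    · have h2 : ¬ (0 < φ j * e j) := by
        intro h2
        rw [decide_eq_decide] at hdec
        exact absurd (hdec.mpr h2) (by linarith)
      have h2' : φ j * e j < 0 := lt_of_le_of_ne (not_lt.mp h2) hnzj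
      exact mul_pos_of_neg_of_neg h1 h2'
    · have h2 : 0 < φ j * e j := by
        rw [decide_eq_decide] at hdec
        exact hdec.mp h1
      exact mul_pos h1 h2
  -- spectral bound
  have hbound : s₀ ≤ k + frustrationIndex M := by
    have hsurj : ∀ ℓ, ∃ i, P₀ i = ℓ := by
      intro ℓ
      obtain ⟨⟨i, hi⟩⟩ := (hP₀conn ℓ).nonempty
      exact ⟨i, hi⟩
    have hlam : ∀ i, ∑ j, M i j * φ j = lam * φ i := by
      intro i
      have := congrFun heig i
      simpa [Matrix.mulVec, dotProduct] using this
    have hposall : ∀ (a : Fin s₀ → ℝ), (∀ p ∈ F, a (P₀ p.1) = a (P₀ p.2)) →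
        ∀ i j, M i j ≠ 0 → a (P₀ i) ≠ a (P₀ j) → 0 < M i j * φ i * φ j := by
      intro a hconstr i j hm0 hcc
      have hij : i ≠ j := fun hh => hcc (by rw [hh])
      have hPij : P₀ i ≠ P₀ j := fun hh => hcc (by rw [hh])
      have hFc : ∀ u v, u ≠ v → Fr u v → a (P₀ u) = a (P₀ v) := by
        intro u v huv hfr
        rcases hFrF u v huv hfr with hmem | hmem
        · exact hconstr (u, v) hmem
        · exact (hconstr (v, u) hmem).symm
      have hnfr : ¬ Fr i j := fun hfr => hcc (hFc i j hij hfr)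
      have hne0 : M i j * e i * e j ≠ 0 :=
        mul_ne_zero (mul_ne_zero hm0 (henz i)) (henz j)
      have hlt : M i j * e i * e j < 0 := by
        rcases lt_or_gt_of_ne hne0 with h | h
        · exact h
        · exact absurd ⟨hm0, h⟩ hnfr
      have hnH : ¬ H.Adj i j := by
        intro hadj
        obtain ⟨u, v, hu, hv, hfr⟩ := hMB (P₀ i) (P₀ j) hPij ⟨i, j, rfl, rfl, hadj⟩
        have huv : u ≠ v := fun hh => hPij (by rw [← hu, ← hv, hh])
        have := hFc u v huv hfr
        rw [hu, hv] at this
        exact hcc this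
      have hnR : ¬ (0 < φ i * φ j * (e i * e j)) := by
        intro hR'
        exact hnH ((hHadj i j).mpr ⟨hij, Or.inl ⟨hm0, hlt, hR'⟩⟩)
      have hφne : φ i * φ j * (e i * e j) ≠ 0 :=
        mul_ne_zero (mul_ne_zero (hφ i) (hφ j)) (mul_ne_zero (henz i) (henz j))
      have hφlt : φ i * φ j * (e i * e j) < 0 := lt_of_le_of_ne (not_lt.mp hnR) hφne
      have hkey : (M i j * e i * e j) * (φ i * φ j * (e i * e j))
          = M i j * φ i * φ j * ((e i * e i) * (e j * e j)) := by ring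
      rw [he2 i, he2 j] at hkey
      have hfin := mul_pos_of_neg_of_neg hlt hφlt
      rw [hkey] at hfin
      simpa using hfin
    have hsb := spectral_bound hn hM hirr hsym lam φ hφ hlam F P₀ hposall hsurj
    rw [hk, hfcard]
    exact hsb
  refine ⟨s₀, hbound, P₀, fun ℓ => ⟨?_, ?_⟩⟩
  · exact (hP₀conn ℓ).mono (fun a b hab => hHG hab)
  · intro i j hi hj hij hM0
    have hnf : ¬ Fr i j := hP₀fr i j (hi.trans hj.symm) hij
    have hne0 : M i j * e i * e j ≠ 0 :=
      mul_ne_zero (mul_ne_zero hM0 (henz i)) (henz j)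
    have hlt : M i j * e i * e j < 0 := by
      rcases lt_or_gt_of_ne hne0 with h | h
      · exact h
      · exact absurd ⟨hM0, h⟩ hnf
    have hp := hsign i j (hi.trans hj.symm)
    have hkey : (M i j * e i * e j) * ((φ i * e i) * (φ j * e j))
        = M i j * φ i * φ j * ((e i * e i) * (e j * e j)) := by ring
    rw [he2 i, he2 j] at hkey
    have := mul_neg_of_neg_of_pos hlt hp
    rw [hkey] at this
    simpa using this
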